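/- arXiv:2507.21894 — 6 statements merged into one kernel-verified Lean document; each statement's English description precedes it below -/
import Mathlib

section
/- Let ε, η > 0 and set δ = ε·η/2. Let T be a bounded normal operator on a complex Hilbert space H, let λ ∈ σ(T), and let x ∈ H be a unit vector with ‖Tx − λx‖ < δ. Then there exists a closed subspace V of H which is invariant under both T and T*, such that the spectrum of the restriction of T to V (as a bounded operator on the Hilbert space V) is contained in the closed ball of radius η centered at λ, and there exists y ∈ V with ‖x − y‖ < ε. -/
section aux
set_option linter.unusedSectionVars false
variable {H : Type*} [NormedAddCommGroup H] [InnerProductSpace ℂ H] [CompleteSpace H]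

/-- If `S` commutes with `A`, then `S` preserves the closure of the range of `A`. -/
lemma aux_invariant {A S : H →L[ℂ] H} (h : S * A = A * S) :
    ∀ v ∈ (LinearMap.range (A : H →ₗ[ℂ] H)).topologicalClosure,
      S v ∈ (LinearMap.range (A : H →ₗ[ℂ] H)).topologicalClosure := by
  intro v hv
  set W := LinearMap.range (A : H →ₗ[ℂ] H) with hW
  have hv' : v ∈ closure (W : Set H) := by
    rw [← Submodule.topologicalClosure_coe]; exact hv
  have hsub : (W : Set H) ⊆ S ⁻¹' closure (W : Set H) := by
    rintro _ ⟨u, rfl⟩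
    have hSA : S (A u) = A (S u) := by
      have := congrArg (fun (Q : H →L[ℂ] H) => Q u) h
      simpa [ContinuousLinearMap.mul_apply] using this
    simp only [Set.mem_preimage, LinearMap.coe_coe, ContinuousLinearMap.coe_coe]
    rw [hSA]
    exact subset_closure ⟨S u, rfl⟩
  have h2 := closure_minimal hsub (isClosed_closure.preimage S.continuous) hv'
  have : S v ∈ closure (W : Set H) := h2
  rwa [← Submodule.topologicalClosure_coe, SetLike.mem_coe] at this

/-- If `F * A = A`, then `F` is the identity on the closure of the range of `A`. -/
lemma aux_eq_on_closure {A F : H →L[ℂ] H} (h : F * A = A) :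
    ∀ v ∈ (LinearMap.range (A : H →ₗ[ℂ] H)).topologicalClosure, F v = v := by
  intro v hv
  set W := LinearMap.range (A : H →ₗ[ℂ] H) with hW
  have hv' : v ∈ closure (W : Set H) := by
    rw [← Submodule.topologicalClosure_coe]; exact hv
  have hcl : IsClosed {w : H | F w = w} := isClosed_eq F.continuous continuous_id
  have hsub : (W : Set H) ⊆ {w : H | F w = w} := by
    rintro _ ⟨u, rfl⟩
    have := congrArg (fun (Q : H →L[ℂ] H) => Q u) h
    simpa [ContinuousLinearMap.mul_apply] using this
  exact closure_minimal hsub hcl hv'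

end aux

/-- Continuity of `g w * (w - c)⁻¹` when `g` vanishes near `c`. -/
lemma aux_cont {g : ℂ → ℂ} {c : ℂ} {r : ℝ} (hr : 0 < r) (hg : Continuous g)
    (h0 : ∀ w, ‖w - c‖ < r → g w = 0) : Continuous fun w => g w * (w - c)⁻¹ := by
  rw [continuous_iff_continuousAt]
  intro w
  by_cases hw : w = c
  · subst hw
    refine ContinuousAt.congr (continuousAt_const (y := 0)) ?_
    filter_upwards [Metric.ball_mem_nhds w hr] with u hu
    rw [Metric.mem_ball, dist_eq_norm] at hu
    simp [h0 u hu]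
  · exact (hg.continuousAt).mul
      (((continuous_id.sub continuous_const).continuousAt).inv₀ (sub_ne_zero.mpr hw))



/-- The restriction of a continuous linear map to an invariant submodule,
as a continuous linear map on the submodule. -/
def clmRestrict {H : Type*} [NormedAddCommGroup H] [InnerProductSpace ℂ H]
    (T : H →L[ℂ] H) (V : Submodule ℂ H) (hV : ∀ x ∈ V, T x ∈ V) : V →L[ℂ] V where
  toLinearMap := T.toLinearMap.restrict hV
  cont := Continuous.subtype_mk (T.continuous.comp continuous_subtype_val) _

set_option maxHeartbeats 2000000 in
/-- Let `ε, η > 0` and `δ = ε * η / 2`.  Let `T` be a bounded normal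
operator on a complex Hilbert space `H`, `μ ∈ σ(T)`, and `x` a unit vector with
`‖T x - μ x‖ < δ`.  Then there is a closed subspace `V` of `H`, invariant under both `T`
and its adjoint, such that the spectrum of the restriction of `T` to `V` is contained in
the closed ball of radius `η` about `μ`, and there is `y ∈ V` with `‖x - y‖ < ε`. -/
theorem exists_reducing_subspace_of_approx_eigenvector {H : Type*} [NormedAddCommGroup H]
    [InnerProductSpace ℂ H] [CompleteSpace H] (ε η : ℝ) (hε : 0 < ε) (hη : 0 < η)
    (T : H →L[ℂ] H) (hT : IsStarNormal T) (μ : ℂ) (hμ : μ ∈ spectrum ℂ T)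
    (x : H) (hx : ‖x‖ = 1) (hTx : ‖T x - μ • x‖ < ε * η / 2) :
    ∃ (V : Submodule ℂ H) (hVT : ∀ v ∈ V, T v ∈ V),
      IsClosed (V : Set H) ∧
      (∀ v ∈ V, ContinuousLinearMap.adjoint T v ∈ V) ∧
      spectrum ℂ (clmRestrict T V hVT) ⊆ Metric.closedBall μ η ∧
      ∃ y ∈ V, ‖x - y‖ < ε := by
  classical
  -- bump function
  set f₀ : ℂ → ℂ := fun w => ((max 0 (min 1 (2 - 2 * ‖w - μ‖ / η)) : ℝ) : ℂ) with hf₀def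
  have hf₀cont : Continuous f₀ := by
    apply Complex.continuous_ofReal.comp
    exact continuous_const.max (continuous_const.min
      (continuous_const.sub ((continuous_const.mul
        ((continuous_id.sub continuous_const).norm)).div_const η)))
  have hf₀1 : ∀ w : ℂ, ‖w - μ‖ ≤ η / 2 → f₀ w = 1 := by
    intro w hw
    have h1 : (1 : ℝ) ≤ 2 - 2 * ‖w - μ‖ / η := by
      have : 2 * ‖w - μ‖ / η ≤ 1 := (div_le_one hη).mpr (by linarith)
      linarith
    simp only [hf₀def]
    rw [min_eq_left h1, max_eq_right zero_le_one, Complex.ofReal_one]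
  have hf₀0 : ∀ w : ℂ, η ≤ ‖w - μ‖ → f₀ w = 0 := by
    intro w hw
    have h1 : 2 - 2 * ‖w - μ‖ / η ≤ 0 := by
      rw [sub_nonpos, le_div_iff₀ hη]; nlinarith
    simp only [hf₀def]
    rw [min_eq_right (h1.trans zero_le_one), max_eq_left h1, Complex.ofReal_zero]
  -- commutation of functional calculus elements
  have hcomm : ∀ g₁ g₂ : ℂ → ℂ, Continuous g₁ → Continuous g₂ →
      cfc g₁ T * cfc g₂ T = cfc g₂ T * cfc g₁ T := by
    intro g₁ g₂ h₁ h₂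
    rw [← cfc_mul g₁ g₂ T h₁.continuousOn h₂.continuousOn,
      ← cfc_mul g₂ g₁ T h₂.continuousOn h₁.continuousOn]
    exact congrArg (fun f => cfc f T) (funext fun w => mul_comm _ _)
  set A : H →L[ℂ] H := cfc f₀ T with hAdef
  have hTA : T * A = A * T := by
    have := hcomm (fun w => w) f₀ continuous_id hf₀cont
    rwa [cfc_id' ℂ T] at this
  have hAsa : star A = A := by
    rw [hAdef, ← cfc_star]
    exact congrArg (fun f => cfc f T) (funext fun w => by
      simp only [hf₀def, Complex.star_def, Complex.conj_ofReal])
  have hstarA : star T * A = A * star T := by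
    have h2 := congrArg star hTA
    rw [star_mul, star_mul, hAsa] at h2
    exact h2.symm
  set V : Submodule ℂ H := (LinearMap.range (A : H →ₗ[ℂ] H)).topologicalClosure with hVdef
  have hVT : ∀ v ∈ V, T v ∈ V := aux_invariant hTA
  have hVstar : ∀ v ∈ V, ContinuousLinearMap.adjoint T v ∈ V := by
    intro v hv
    have := aux_invariant hstarA v hv
    rwa [ContinuousLinearMap.star_eq_adjoint] at this
  have hVclosed : IsClosed (V : Set H) :=
    (LinearMap.range (A : H →ₗ[ℂ] H)).isClosed_topologicalClosure
  -- the vector y = A x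
  set m₁ : ℂ → ℂ := fun w => (1 - f₀ w) * (w - μ)⁻¹ with hm₁def
  have hm₁cont : Continuous m₁ :=
    aux_cont (half_pos hη) (continuous_const.sub hf₀cont)
      (fun w hw => by rw [hf₀1 w hw.le]; ring)
  have hm₁id : ∀ w : ℂ, m₁ w * (w - μ) = 1 - f₀ w := by
    intro w
    by_cases hw : w = μ
    · rw [hw, hf₀1 μ (by simpa using (half_pos hη).le)]
      simp
    · show (1 - f₀ w) * (w - μ)⁻¹ * (w - μ) = 1 - f₀ w
      field_simp [sub_ne_zero.mpr hw]
  have hm₁bd : ∀ w : ℂ, ‖m₁ w‖ ≤ 2 / η := by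
    intro w
    by_cases hw : ‖w - μ‖ ≤ η / 2
    · rw [show m₁ w = 0 from by
        show (1 - f₀ w) * (w - μ)⁻¹ = 0
        rw [hf₀1 w hw]; ring]
      simp only [norm_zero]; positivity
    · push_neg at hw
      have hmem1 : (0:ℝ) ≤ max 0 (min 1 (2 - 2 * ‖w - μ‖ / η)) := le_max_left _ _
      have hmem2 : max 0 (min 1 (2 - 2 * ‖w - μ‖ / η)) ≤ 1 :=
        max_le zero_le_one (min_le_left _ _)
      have h1 : ‖1 - f₀ w‖ ≤ 1 := by
        simp only [hf₀def]
        rw [show (1 : ℂ) - ((max 0 (min 1 (2 - 2 * ‖w - μ‖ / η)) : ℝ) : ℂ)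
            = ((1 - max 0 (min 1 (2 - 2 * ‖w - μ‖ / η)) : ℝ) : ℂ) by push_cast; ring,
          Complex.norm_real, Real.norm_eq_abs, abs_le]
        constructor <;> linarith
      have h2 : ‖(w - μ)⁻¹‖ ≤ 2 / η := by
        rw [norm_inv]
        calc ‖w - μ‖⁻¹ ≤ (η / 2)⁻¹ := by
              apply inv_anti₀ (half_pos hη) hw.le
          _ = 2 / η := by rw [inv_div]
      calc ‖m₁ w‖ = ‖1 - f₀ w‖ * ‖(w - μ)⁻¹‖ := norm_mul _ _
        _ ≤ 1 * (2 / η) := mul_le_mul h1 h2 (norm_nonneg _) zero_le_one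
        _ = 2 / η := one_mul _
  have hTz : ∀ z : ℂ, cfc (fun w => w - z) T = T - z • 1 := by
    intro z
    rw [cfc_sub (fun w => w) (fun _ => z) T continuous_id.continuousOn
      continuous_const.continuousOn, cfc_id' ℂ T, cfc_const z T,
      Algebra.algebraMap_eq_smul_one]
  have h1A : (1 : H →L[ℂ] H) - A = cfc m₁ T * (T - μ • 1) := by
    have e1 : (fun w : ℂ => (1:ℂ) - f₀ w) = fun w => m₁ w * (w - μ) :=
      funext fun w => (hm₁id w).symm
    have e2 : cfc (fun w : ℂ => (1:ℂ) - f₀ w) T = 1 - A := by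
      rw [cfc_sub (fun _ => (1:ℂ)) f₀ T continuous_const.continuousOn hf₀cont.continuousOn,
        cfc_const (1:ℂ) T, map_one]
    rw [← e2, e1, cfc_mul m₁ (fun w => w - μ) T hm₁cont.continuousOn
      ((continuous_id.sub continuous_const).continuousOn), hTz μ]
  have hxy : ‖x - A x‖ < ε := by
    have h3 : x - A x = cfc m₁ T (T x - μ • x) := by
      have : x - A x = ((1 : H →L[ℂ] H) - A) x := by
        simp [ContinuousLinearMap.sub_apply]
      rw [this, h1A]
      simp [ContinuousLinearMap.mul_apply, ContinuousLinearMap.sub_apply,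
        ContinuousLinearMap.smul_apply, ContinuousLinearMap.one_apply]
    calc ‖x - A x‖ = ‖cfc m₁ T (T x - μ • x)‖ := by rw [h3]
      _ ≤ ‖cfc m₁ T‖ * ‖T x - μ • x‖ := (cfc m₁ T).le_opNorm _
      _ ≤ (2 / η) * ‖T x - μ • x‖ := by
          apply mul_le_mul_of_nonneg_right _ (norm_nonneg _)
          exact norm_cfc_le (by positivity) (fun w _ => hm₁bd w)
      _ < (2 / η) * (ε * η / 2) := by
          apply mul_lt_mul_of_pos_left hTx (by positivity)
      _ = ε := by field_simp
  have hAx : A x ∈ V := Submodule.le_topologicalClosure _ ⟨x, rfl⟩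
  have hspec : spectrum ℂ (clmRestrict T V hVT) ⊆ Metric.closedBall μ η := by
    intro z hz
    by_contra hz'
    have hd : η < ‖z - μ‖ := by
      simpa [Metric.mem_closedBall, dist_eq_norm, not_le] using hz'
    set d : ℝ := ‖z - μ‖ - η with hddef
    have hd0 : 0 < d := sub_pos.mpr hd
    set f₁ : ℂ → ℂ := fun w => ((max 0 (min 1 ((η + d/2 - ‖w - μ‖) * (2/d))) : ℝ) : ℂ)
      with hf₁def
    have hf₁cont : Continuous f₁ := by
      apply Complex.continuous_ofReal.comp
      exact continuous_const.max (continuous_const.min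
        ((continuous_const.sub ((continuous_id.sub continuous_const).norm)).mul
          continuous_const))
    have hf₁1 : ∀ w : ℂ, ‖w - μ‖ ≤ η → f₁ w = 1 := by
      intro w hw
      have h1 : (1:ℝ) ≤ (η + d/2 - ‖w - μ‖) * (2/d) := by
        have h2 : d/2 ≤ η + d/2 - ‖w - μ‖ := by linarith
        calc (1:ℝ) = (d/2) * (2/d) := by field_simp
          _ ≤ _ := mul_le_mul_of_nonneg_right h2 (by positivity)
      simp only [hf₁def]
      rw [min_eq_left h1, max_eq_right zero_le_one, Complex.ofReal_one]
    have hf₁0 : ∀ w : ℂ, η + d/2 ≤ ‖w - μ‖ → f₁ w = 0 := by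
      intro w hw
      have h1 : (η + d/2 - ‖w - μ‖) * (2/d) ≤ 0 :=
        mul_nonpos_of_nonpos_of_nonneg (by linarith) (by positivity)
      simp only [hf₁def]
      rw [min_eq_right (h1.trans zero_le_one), max_eq_left h1, Complex.ofReal_zero]
    set hfun : ℂ → ℂ := fun w => f₁ w * (w - z)⁻¹ with hhdef
    have hhcont : Continuous hfun := by
      apply aux_cont (half_pos hd0) hf₁cont
      intro w hw
      apply hf₁0
      have t1 : ‖z - μ‖ ≤ ‖z - w‖ + ‖w - μ‖ := by
        have e : z - μ = (z - w) + (w - μ) := by ring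
        rw [e]; exact norm_add_le _ _
      have t2 : ‖z - w‖ = ‖w - z‖ := norm_sub_rev z w
      linarith
    have hid : ∀ w : ℂ, hfun w * (w - z) = f₁ w := by
      intro w
      by_cases hw : w = z
      · rw [hw, hf₁0 z (by simp only [hddef]; linarith)]
        simp
      · show f₁ w * (w - z)⁻¹ * (w - z) = f₁ w
        field_simp [sub_ne_zero.mpr hw]
    have hkey1 : cfc hfun T * (T - z • 1) = cfc f₁ T := by
      rw [← hTz z, ← cfc_mul hfun (fun w => w - z) T hhcont.continuousOn
        ((continuous_id.sub continuous_const).continuousOn)]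
      exact congrArg (fun f => cfc f T) (funext hid)
    have hkey2 : (T - z • 1) * cfc hfun T = cfc f₁ T := by
      rw [← hTz z, ← cfc_mul (fun w => w - z) hfun T
        ((continuous_id.sub continuous_const).continuousOn) hhcont.continuousOn]
      exact congrArg (fun f => cfc f T) (funext fun w => by rw [mul_comm]; exact hid w)
    have hFA : cfc f₁ T * A = A := by
      rw [hAdef, ← cfc_mul f₁ f₀ T hf₁cont.continuousOn hf₀cont.continuousOn]
      apply congrArg (fun f => cfc f T)
      funext w
      by_cases hw : ‖w - μ‖ ≤ η
      · rw [hf₁1 w hw, one_mul]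
      · push_neg at hw
        rw [hf₀0 w hw.le, mul_zero]
    have hFid := aux_eq_on_closure hFA
    have hhA : cfc hfun T * A = A * cfc hfun T := hcomm hfun f₀ hhcont hf₀cont
    have hVh : ∀ v ∈ V, cfc hfun T v ∈ V := aux_invariant hhA
    have hunit : IsUnit (algebraMap ℂ (V →L[ℂ] V) z - clmRestrict T V hVT) := by
      rw [isUnit_iff_exists]
      refine ⟨-(clmRestrict (cfc hfun T) V hVh), ?_, ?_⟩
      · ext v
        have e1 : T (cfc hfun T (v : H)) - z • (cfc hfun T (v : H)) = (v : H) := by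
          have h := congrArg (fun (Q : H →L[ℂ] H) => Q (v : H)) hkey2
          simp only [ContinuousLinearMap.mul_apply, ContinuousLinearMap.sub_apply,
            ContinuousLinearMap.smul_apply, ContinuousLinearMap.one_apply] at h
          rw [h]; exact hFid _ v.2
        simp only [ContinuousLinearMap.mul_apply, ContinuousLinearMap.sub_apply,
          ContinuousLinearMap.neg_apply, ContinuousLinearMap.one_apply,
          Algebra.algebraMap_eq_smul_one, ContinuousLinearMap.smul_apply,
          AddSubgroupClass.coe_sub, SetLike.val_smul, NegMemClass.coe_neg,
          ContinuousLinearMap.one_apply]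
        show z • (-(cfc hfun T (v : H))) - T (-(cfc hfun T (v : H))) = (v : H)
        rw [smul_neg, map_neg, sub_neg_eq_add, neg_add_eq_sub]
        exact e1
      · ext v
        have e2 : cfc hfun T (T (v : H) - z • (v : H)) = (v : H) := by
          have h := congrArg (fun (Q : H →L[ℂ] H) => Q (v : H)) hkey1
          simp only [ContinuousLinearMap.mul_apply, ContinuousLinearMap.sub_apply,
            ContinuousLinearMap.smul_apply, ContinuousLinearMap.one_apply] at h
          rw [h]; exact hFid _ v.2
        simp only [ContinuousLinearMap.mul_apply, ContinuousLinearMap.sub_apply,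
          ContinuousLinearMap.neg_apply, ContinuousLinearMap.one_apply,
          Algebra.algebraMap_eq_smul_one, ContinuousLinearMap.smul_apply,
          AddSubgroupClass.coe_sub, SetLike.val_smul, NegMemClass.coe_neg,
          ContinuousLinearMap.one_apply]
        show -(cfc hfun T (z • (v : H) - T (v : H))) = (v : H)
        rw [← neg_sub (T (v : H)) (z • (v : H)), map_neg, neg_neg, e2]
    exact (spectrum.notMem_iff.mpr hunit) hz
  exact ⟨V, hVT, hVclosed, hVstar, hspec, A x, hAx, hxy⟩
end

section
/- Let ε, η > 0, let T be a bounded normal operator on a complex Hilbert space H, and let λ ∈ σ(T) be such that |λ′ − λ| ≥ η for every λ′ ∈ σ(T) \ {λ}. If x ∈ H is a unit vector with ‖Tx − λx‖ < ε·η/2, then the distance from x to the eigenspace ker(T − λ·I) is less than ε. -/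
/-- Let `ε, η > 0`, let `T` be a bounded normal operator on a complex
Hilbert space `H`, and let `μ ∈ σ(T)` be at distance at least `η` from every other point of
the spectrum.  If `x` is a unit vector with `‖T x - μ x‖ < ε * η / 2`, then the distance from
`x` to the eigenspace `ker (T - μ)` is less than `ε`. -/
theorem infDist_eigenspace_lt {H : Type*} [NormedAddCommGroup H]
    [InnerProductSpace ℂ H] [CompleteSpace H] (ε η : ℝ) (hε : 0 < ε) (hη : 0 < η)
    (T : H →L[ℂ] H) (hT : IsStarNormal T) (μ : ℂ) (hμ : μ ∈ spectrum ℂ T)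
    (hsep : ∀ μ' ∈ spectrum ℂ T, μ' ≠ μ → η ≤ ‖μ' - μ‖)
    (x : H) (hx : ‖x‖ = 1) (hTx : ‖T x - μ • x‖ < ε * η / 2) :
    Metric.infDist x (LinearMap.ker ((T - μ • (1 : H →L[ℂ] H)) : H →ₗ[ℂ] H) : Set H) < ε := by
  set S := spectrum ℂ T with hS
  set h : ℂ → ℂ := fun z => if z = μ then 0 else (z - μ)⁻¹ with hhdef
  -- continuity of h on the spectrum
  have hcont : ContinuousOn h S := by
    intro z hz
    by_cases hzμ : z = μ
    · subst hzμ
      have : ∀ w ∈ S ∩ Metric.ball z η, h w = 0 := by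
        intro w ⟨hwS, hwb⟩
        have hlt : ‖w - z‖ < η := by simpa [dist_eq_norm] using hwb
        have : w = z := by
          by_contra hne
          exact absurd (hsep w hwS hne) hlt.not_ge
        simp [hhdef, this]
      apply ContinuousWithinAt.congr_of_eventuallyEq (f := fun _ => (0 : ℂ))
        continuousWithinAt_const
      · filter_upwards [inter_mem_nhdsWithin S (Metric.ball_mem_nhds z hη)] with w hw
        exact this w hw
      · simp [hhdef]
    · have hopen : IsOpen {w : ℂ | w ≠ μ} := isOpen_ne
      have hco : ContinuousOn h {w : ℂ | w ≠ μ} := by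
        apply ContinuousOn.congr (f := fun w => (w - μ)⁻¹)
        · exact ContinuousOn.inv₀ (by fun_prop) fun w hw => sub_ne_zero.mpr hw
        · intro w hw; simp only [hhdef]; rw [if_neg hw]
      exact ((hco.continuousAt (hopen.mem_nhds hzμ)).continuousWithinAt)
  have hbound : ∀ z ∈ S, ‖h z‖ ≤ η⁻¹ := by
    intro z hz
    by_cases hzμ : z = μ
    · simp [hhdef, hzμ, inv_nonneg.mpr hη.le]
    · have := hsep z hz hzμ
      simp only [hhdef, if_neg hzμ, norm_inv]
      exact inv_anti₀ hη this
  -- T - μ as cfc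
  have hsub : T - μ • (1 : H →L[ℂ] H) = cfc (fun z : ℂ => z - μ) T := by
    rw [cfc_sub (fun z : ℂ => z) (fun _ => μ) T (by fun_prop) (by fun_prop),
      cfc_id' ℂ T, cfc_const μ T, Algebra.algebraMap_eq_smul_one]
  set g : ℂ → ℂ := fun z => h z * (z - μ) with hgdef
  have hgcont : ContinuousOn g S := hcont.mul (by fun_prop)
  set Q : H →L[ℂ] H := cfc g T with hQdef
  have hQ : Q = cfc h T * (T - μ • (1 : H →L[ℂ] H)) := by
    rw [hsub, hQdef, ← cfc_mul h (fun z : ℂ => z - μ) T hcont (by fun_prop)]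
  -- x - Q x is in the kernel
  have hker : (T - μ • (1 : H →L[ℂ] H)) * (1 - Q) = 0 := by
    have h1 : (1 : H →L[ℂ] H) - Q = cfc (fun z : ℂ => 1 - g z) T := by
      rw [cfc_sub (fun _ : ℂ => (1:ℂ)) g T (by fun_prop) hgcont, cfc_const (1:ℂ) T,
        map_one, hQdef]
    rw [hsub, h1, ← cfc_mul (fun z : ℂ => z - μ) (fun z : ℂ => 1 - g z) T (by fun_prop)
      (continuousOn_const.sub hgcont)]
    have : cfc (fun z : ℂ => (z - μ) * (1 - g z)) T = cfc (fun _ : ℂ => (0:ℂ)) T := by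
      apply cfc_congr
      intro z hz
      by_cases hzμ : z = μ
      · simp [hzμ]
      · simp [hgdef, hhdef, hzμ, inv_mul_cancel₀ (sub_ne_zero.mpr hzμ)]
    rw [this, cfc_const (0:ℂ) T, map_zero]
  have hmem : x - Q x ∈ (LinearMap.ker ((T - μ • (1 : H →L[ℂ] H)) : H →ₗ[ℂ] H) : Set H) := by
    have := congrArg (fun A : H →L[ℂ] H => A x) hker
    simpa [ContinuousLinearMap.mul_apply, sub_eq_zero] using this
  -- norm estimate
  have hnormQ : ‖Q x‖ ≤ η⁻¹ * ‖(T - μ • (1 : H →L[ℂ] H)) x‖ := by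
    rw [hQ]
    calc ‖(cfc h T * (T - μ • (1 : H →L[ℂ] H))) x‖
        = ‖cfc h T ((T - μ • (1 : H →L[ℂ] H)) x)‖ := by
          rw [ContinuousLinearMap.mul_apply]
      _ ≤ ‖cfc h T‖ * ‖(T - μ • (1 : H →L[ℂ] H)) x‖ := (cfc h T).le_opNorm _
      _ ≤ η⁻¹ * ‖(T - μ • (1 : H →L[ℂ] H)) x‖ := by
          exact mul_le_mul_of_nonneg_right
            (norm_cfc_le (inv_nonneg.mpr hη.le) hbound) (norm_nonneg _)
  have hTx' : ‖(T - μ • (1 : H →L[ℂ] H)) x‖ < ε * η / 2 := by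
    simpa [ContinuousLinearMap.sub_apply, ContinuousLinearMap.smul_apply] using hTx
  have hQx : ‖Q x‖ < ε := by
    calc ‖Q x‖ ≤ η⁻¹ * ‖(T - μ • (1 : H →L[ℂ] H)) x‖ := hnormQ
      _ < η⁻¹ * (ε * η / 2) := by gcongr
      _ = ε / 2 := by field_simp
      _ < ε := by linarith
  calc Metric.infDist x (LinearMap.ker ((T - μ • (1 : H →L[ℂ] H)) : H →ₗ[ℂ] H) : Set H)
      ≤ dist x (x - Q x) := Metric.infDist_le_dist_of_mem hmem
    _ = ‖Q x‖ := by rw [dist_eq_norm]; simp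
    _ < ε := hQx
end

section
/- For every natural number n ≥ 1 and every η > 0 there exists δ > 0 with the following property: whenever T is a bounded normal operator on a complex Hilbert space H, λ ∈ σ(T) satisfies |λ′ − λ| ≥ η for every λ′ ∈ σ(T) \ {λ}, and x₁, …, xₙ ∈ H is an orthonormal family with ‖Txᵢ − λxᵢ‖ < δ for each i, then the eigenspace ker(T − λ·I) has dimension at least n (i.e. it contains n linearly independent vectors). -/
/-- For every `n ≥ 1` and `η > 0` there is `δ > 0` such that whenever `T`
is a bounded normal operator on a complex Hilbert space `H`, `μ ∈ σ(T)` is at distance at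
least `η` from every other point of the spectrum, and `x₁, …, xₙ` is an orthonormal family
with `‖T xᵢ - μ xᵢ‖ < δ` for each `i`, then the eigenspace `ker (T - μ)` contains `n`
linearly independent vectors. -/
theorem eigenspace_dim_ge_of_approx_orthonormal (n : ℕ) (hn : 1 ≤ n) (η : ℝ) (hη : 0 < η) :
    ∃ δ > (0 : ℝ), ∀ (H : Type*) [NormedAddCommGroup H] [InnerProductSpace ℂ H]
      [CompleteSpace H] (T : H →L[ℂ] H), IsStarNormal T →
      ∀ μ ∈ spectrum ℂ T, (∀ μ' ∈ spectrum ℂ T, μ' ≠ μ → η ≤ ‖μ' - μ‖) →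
      ∀ x : Fin n → H, Orthonormal ℂ x → (∀ i, ‖T (x i) - μ • x i‖ < δ) →
      ∃ y : Fin n → H, (∀ i, y i ∈ LinearMap.ker (↑(T - μ • (1 : H →L[ℂ] H)) : H →ₗ[ℂ] H)) ∧
        LinearIndependent ℂ y := by
  have hn0 : (0:ℝ) < n := by positivity
  refine ⟨η / (2 * n), by positivity, ?_⟩
  intro H _ _ _ T hT μ hμ hsep x hx hδ
  set δ : ℝ := η / (2 * n) with hδdef
  -- dichotomy for spectrum points
  have hdich : ∀ z ∈ spectrum ℂ T, z = μ ∨ η ≤ ‖z - μ‖ := by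
    intro z hz
    by_cases h : z = μ
    · exact Or.inl h
    · exact Or.inr (hsep z hz h)
  set f : ℂ → ℂ := fun z => if ‖z - μ‖ < η/2 then 1 else 0 with hfdef
  set g : ℂ → ℂ := fun z => if ‖z - μ‖ < η/2 then 0 else (z - μ)⁻¹ with hgdef
  have hball : ∀ z₀ : ℂ, η ≤ ‖z₀ - μ‖ → ∀ z ∈ Metric.ball z₀ (η/2), ¬ ‖z - μ‖ < η/2 := by
    intro z₀ h0 z hz
    rw [Metric.mem_ball, dist_eq_norm] at hz
    have : η - η/2 ≤ ‖z - μ‖ := by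
      have := norm_sub_norm_le (z₀ - μ) (z₀ - z)
      have he : (z₀ - μ) - (z₀ - z) = z - μ := by ring
      rw [he] at this
      have : ‖z₀ - μ‖ - ‖z₀ - z‖ ≤ ‖z - μ‖ := this
      have h2 : ‖z₀ - z‖ < η/2 := by rwa [norm_sub_rev] at hz
      linarith
    linarith
  have hcf : ContinuousOn f (spectrum ℂ T) := by
    intro z₀ hz₀
    rcases hdich z₀ hz₀ with rfl | h0
    · apply ContinuousWithinAt.congr_of_eventuallyEq (continuousWithinAt_const (b := (1:ℂ)))
      · filter_upwards [nhdsWithin_le_nhds (Metric.ball_mem_nhds z₀ (ε := η/2) (by positivity))] with z hz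
        rw [Metric.mem_ball, dist_eq_norm] at hz
        simp only [hfdef, if_pos hz]
      · simp [hfdef, hη]
    · apply ContinuousWithinAt.congr_of_eventuallyEq (continuousWithinAt_const (b := (0:ℂ)))
      · filter_upwards [nhdsWithin_le_nhds (Metric.ball_mem_nhds z₀ (ε := η/2) (by positivity))] with z hz
        simp only [hfdef, if_neg (hball z₀ h0 z hz)]
      · simp only [hfdef]
        rw [if_neg]
        exact hball z₀ h0 z₀ (Metric.mem_ball_self (by positivity))
  have hcg : ContinuousOn g (spectrum ℂ T) := by
    intro z₀ hz₀
    rcases hdich z₀ hz₀ with rfl | h0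
    · apply ContinuousWithinAt.congr_of_eventuallyEq (continuousWithinAt_const (b := (0:ℂ)))
      · filter_upwards [nhdsWithin_le_nhds (Metric.ball_mem_nhds z₀ (ε := η/2) (by positivity))] with z hz
        rw [Metric.mem_ball, dist_eq_norm] at hz
        simp only [hgdef, if_pos hz]
      · simp [hgdef, hη]
    · have hne : z₀ - μ ≠ 0 := by
        intro h
        rw [h, norm_zero] at h0; linarith
      have hc : ContinuousWithinAt (fun z : ℂ => (z - μ)⁻¹) (spectrum ℂ T) z₀ :=
        (((continuous_id.sub continuous_const).continuousAt).inv₀ hne).continuousWithinAt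
      apply ContinuousWithinAt.congr_of_eventuallyEq hc
      · filter_upwards [nhdsWithin_le_nhds (Metric.ball_mem_nhds z₀ (ε := η/2) (by positivity))] with z hz
        simp only [hgdef, if_neg (hball z₀ h0 z hz)]
      · simp only [hgdef]
        rw [if_neg]
        exact hball z₀ h0 z₀ (Metric.mem_ball_self (by positivity))
  have hcm : ContinuousOn (fun z : ℂ => z - μ) (spectrum ℂ T) :=
    (continuous_id.sub continuous_const).continuousOn
  set P : H →L[ℂ] H := cfc f T with hPdef
  -- T - μ•1 = cfc (z - μ)
  have hTm : T - μ • (1 : H →L[ℂ] H) = cfc (fun z : ℂ => z - μ) T := by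
    rw [cfc_sub (fun z : ℂ => z) (fun _ => μ) T continuousOn_id (continuousOn_const),
      cfc_id' ℂ T, cfc_const μ T, Algebra.algebraMap_eq_smul_one]
  -- (T - μ) * P = 0
  have hTP : (T - μ • (1 : H →L[ℂ] H)) * P = 0 := by
    rw [hTm, hPdef, ← cfc_mul _ f T hcm hcf]
    have : cfc (fun z : ℂ => (z - μ) * f z) T = cfc (fun _ : ℂ => (0:ℂ)) T := by
      apply cfc_congr
      intro z hz
      rcases hdich z hz with rfl | h0
      · simp
      · simp only [hfdef]
        rw [if_neg]
        · ring
        · intro h; linarith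
    rw [this, cfc_const 0 T, map_zero]
  have hker : ∀ v : H, P v ∈ LinearMap.ker (↑(T - μ • (1 : H →L[ℂ] H)) : H →ₗ[ℂ] H) := by
    intro v
    rw [LinearMap.mem_ker]
    have := congrArg (fun A : H →L[ℂ] H => A v) hTP
    simpa [ContinuousLinearMap.mul_apply] using this
  -- 1 - P = cfc g T * (T - μ)
  have h1P : (1 : H →L[ℂ] H) - P = cfc g T * (T - μ • (1 : H →L[ℂ] H)) := by
    have e1 : (1 : H →L[ℂ] H) - P = cfc (fun z : ℂ => 1 - f z) T := by
      rw [cfc_sub (fun _ : ℂ => (1:ℂ)) f T continuousOn_const hcf, cfc_const 1 T, map_one]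
    rw [e1, hTm, ← cfc_mul g _ T hcg hcm]
    apply cfc_congr
    intro z hz
    rcases hdich z hz with rfl | h0
    · simp [hfdef, hgdef, hη]
    · have hne : z - μ ≠ 0 := by
        intro h; rw [h, norm_zero] at h0; linarith
      have hnlt : ¬ ‖z - μ‖ < η/2 := by intro h; linarith
      simp only [hfdef, hgdef, if_neg hnlt]
      field_simp
      simp
  have hgnorm : ‖cfc g T‖ ≤ η⁻¹ := by
    apply norm_cfc_le (by positivity)
    intro z hz
    rcases hdich z hz with rfl | h0
    · simp only [hgdef, sub_self, norm_zero, if_pos (by positivity : (0:ℝ) < η/2), norm_zero]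
      positivity
    · have hnlt : ¬ ‖z - μ‖ < η/2 := by intro h; linarith
      simp only [hgdef, if_neg hnlt, norm_inv]
      exact inv_anti₀ hη h0
  -- main approximation bound
  have happrox : ∀ i, ‖x i - P (x i)‖ ≤ 1 / (2 * n) := by
    intro i
    have h1 : x i - P (x i) = (cfc g T) ((T - μ • (1 : H →L[ℂ] H)) (x i)) := by
      have := congrArg (fun A : H →L[ℂ] H => A (x i)) h1P
      simpa [ContinuousLinearMap.mul_apply] using this
    have h2 : (T - μ • (1 : H →L[ℂ] H)) (x i) = T (x i) - μ • x i := by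
      simp [ContinuousLinearMap.sub_apply]
    rw [h1, h2]
    calc ‖(cfc g T) (T (x i) - μ • x i)‖ ≤ ‖cfc g T‖ * ‖T (x i) - μ • x i‖ :=
          ContinuousLinearMap.le_opNorm _ _
      _ ≤ η⁻¹ * δ := by
          apply mul_le_mul hgnorm (le_of_lt (hδ i)) (norm_nonneg _) (by positivity)
      _ = 1 / (2 * n) := by
          rw [hδdef]; field_simp
  haveI : Nonempty (Fin n) := ⟨⟨0, hn⟩⟩
  refine ⟨fun i => P (x i), fun i => hker (x i), ?_⟩
  rw [Fintype.linearIndependent_iff]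
  intro c hc
  -- pick index with max |c|
  obtain ⟨j, -, hj⟩ := Finset.exists_max_image Finset.univ (fun i => ‖c i‖)
    (Finset.univ_nonempty (α := Fin n))
  have hcj : ∀ i, ‖c i‖ ≤ ‖c j‖ := fun i => hj i (Finset.mem_univ i)
  have key : ‖c j‖ ≤ ‖c j‖ / 2 := by
    have h1 : (c j : ℂ) = inner ℂ (x j) (∑ i, c i • x i) := (hx.inner_right_fintype c j).symm
    have h2 : ‖c j‖ ≤ ‖∑ i, c i • x i‖ := by
      calc ‖c j‖ = ‖(inner ℂ (x j) (∑ i, c i • x i) : ℂ)‖ := by rw [← h1]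
        _ ≤ ‖x j‖ * ‖∑ i, c i • x i‖ := norm_inner_le_norm _ _
        _ ≤ 1 * ‖∑ i, c i • x i‖ := by
            apply mul_le_mul_of_nonneg_right (le_of_eq (hx.1 j)) (norm_nonneg _)
        _ = ‖∑ i, c i • x i‖ := one_mul _
    have h3 : (∑ i, c i • x i) = ∑ i, c i • (x i - P (x i)) := by
      rw [← sub_zero (∑ i, c i • x i), ← hc, ← Finset.sum_sub_distrib]
      congr 1; ext i; rw [← smul_sub]
    have h4 : ‖∑ i, c i • (x i - P (x i))‖ ≤ ∑ i : Fin n, ‖c j‖ * (1 / (2 * n)) := by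
      refine (norm_sum_le _ _).trans (Finset.sum_le_sum fun i _ => ?_)
      rw [norm_smul]
      exact mul_le_mul (hcj i) (happrox i) (norm_nonneg _) (norm_nonneg _)
    have h5 : (∑ _i : Fin n, ‖c j‖ * (1 / (2 * n)) : ℝ) = ‖c j‖ / 2 := by
      rw [Finset.sum_const, Finset.card_univ, Fintype.card_fin, nsmul_eq_mul]
      field_simp
    rw [h3] at h2
    linarith [h4, h5 ▸ h4]
  have : ‖c j‖ = 0 := by linarith [norm_nonneg (c j)]
  intro i
  have : ‖c i‖ ≤ 0 := this ▸ hcj i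
  simpa using le_antisymm this (norm_nonneg _)
end

section
/- Let T₁ and T₂ be bounded normal operators on complex Hilbert spaces H₁ and H₂ with ‖T₁‖ ≤ 1 and ‖T₂‖ ≤ 1, and let f : ℂ → ℂ be a continuous function. Suppose (Uₙ) is a sequence of unitary operators Uₙ : H₁ → H₂ such that ‖Uₙ T₁ Uₙ* − T₂‖ → 0 as n → ∞. Then ‖Uₙ f(T₁) Uₙ* − f(T₂)‖ → 0 as n → ∞, where f(Tᵢ) denotes the continuous functional calculus of f applied to the normal operator Tᵢ. -/
open scoped Topology
open Filter ContinuousLinearMap Metric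

/-- Conjugation of a bounded operator on `H₁` by a unitary (surjective linear isometry)
`U : H₁ ≃ₗᵢ[ℂ] H₂`, yielding the operator `U T U⁻¹ = U T U*` on `H₂`. -/
noncomputable def unitaryConj {H₁ H₂ : Type*}
    [NormedAddCommGroup H₁] [InnerProductSpace ℂ H₁]
    [NormedAddCommGroup H₂] [InnerProductSpace ℂ H₂]
    (U : H₁ ≃ₗᵢ[ℂ] H₂) (T : H₁ →L[ℂ] H₁) : H₂ →L[ℂ] H₂ :=
  U.toLinearIsometry.toContinuousLinearMap ∘L T ∘L
    U.symm.toLinearIsometry.toContinuousLinearMap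

section conj
variable {H₁ H₂ : Type*}
    [NormedAddCommGroup H₁] [InnerProductSpace ℂ H₁] [CompleteSpace H₁]
    [NormedAddCommGroup H₂] [InnerProductSpace ℂ H₂] [CompleteSpace H₂]

/-- Conjugation by a unitary as a star algebra homomorphism. -/
noncomputable def unitaryConjStarAlgHom (U : H₁ ≃ₗᵢ[ℂ] H₂) :
    (H₁ →L[ℂ] H₁) →⋆ₐ[ℂ] (H₂ →L[ℂ] H₂) where
  toFun := unitaryConj U
  map_one' := by ext x; simp [unitaryConj]
  map_mul' T S := by ext x; simp [unitaryConj]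
  map_zero' := by ext x; simp [unitaryConj]
  map_add' T S := by ext x; simp [unitaryConj]
  commutes' c := by ext x; simp [unitaryConj]
  map_star' T := by
    have h1 : adjoint U.toLinearIsometry.toContinuousLinearMap
        = U.symm.toLinearIsometry.toContinuousLinearMap :=
      LinearIsometryEquiv.adjoint_eq_symm U
    have h2 : adjoint U.symm.toLinearIsometry.toContinuousLinearMap
        = U.toLinearIsometry.toContinuousLinearMap := by
      have := LinearIsometryEquiv.adjoint_eq_symm U.symm
      rw [LinearIsometryEquiv.symm_symm] at this
      exact this
    simp only [unitaryConj, star_eq_adjoint, adjoint_comp, h1, h2, comp_assoc]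

lemma unitaryConj_norm_le (U : H₁ ≃ₗᵢ[ℂ] H₂) (T : H₁ →L[ℂ] H₁) :
    ‖unitaryConj U T‖ ≤ ‖T‖ := by
  calc ‖unitaryConj U T‖
      ≤ ‖U.toLinearIsometry.toContinuousLinearMap‖ *
        ‖T ∘L U.symm.toLinearIsometry.toContinuousLinearMap‖ := opNorm_comp_le _ _
    _ ≤ 1 * (‖T‖ * ‖U.symm.toLinearIsometry.toContinuousLinearMap‖) := by
        gcongr
        · exact U.toLinearIsometry.norm_toContinuousLinearMap_le
        · exact opNorm_comp_le _ _
    _ ≤ 1 * (‖T‖ * 1) := by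
        gcongr; exact U.symm.toLinearIsometry.norm_toContinuousLinearMap_le
    _ = ‖T‖ := by ring

lemma unitaryConjStarAlgHom_continuous (U : H₁ ≃ₗᵢ[ℂ] H₂) :
    Continuous (unitaryConjStarAlgHom U) :=
  AddMonoidHomClass.continuous_of_bound (unitaryConjStarAlgHom U) 1
    fun T => by rw [one_mul]; exact unitaryConj_norm_le U T

end conj

section cfcCont

variable {A : Type*} [CStarAlgebra A]

/-- The continuous functional calculus on functions on a set containing the spectrum. -/
noncomputable def cfcOnSet (K : Set ℂ) (c : A) (hc : IsStarNormal c)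
    (hs : spectrum ℂ c ⊆ K) : C(K, ℂ) →⋆ₐ[ℂ] A :=
  (cfcHom hc (R := ℂ)).comp (ContinuousMap.compStarAlgHom' ℂ ℂ
    ⟨Set.inclusion hs, continuous_id.subtype_map hs⟩)

lemma norm_cfcOnSet_le (K : Set ℂ) [CompactSpace K] (c : A) (hc : IsStarNormal c)
    (hs : spectrum ℂ c ⊆ K) (g : C(K, ℂ)) :
    ‖cfcOnSet K c hc hs g‖ ≤ ‖g‖ := by
  rw [cfcOnSet, StarAlgHom.comp_apply, norm_cfcHom c _ hc]
  exact (ContinuousMap.norm_le _ (norm_nonneg g)).mpr fun x =>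
    g.norm_coe_le_norm _

lemma cfcOnSet_restrict (K : Set ℂ) (c : A) (hc : IsStarNormal c)
    (hs : spectrum ℂ c ⊆ K) (f : ℂ → ℂ) (hf : Continuous f) :
    cfcOnSet K c hc hs ((⟨f, hf⟩ : C(ℂ, ℂ)).restrict K) = cfc f c := by
  rw [cfc_apply f c hc (hf.continuousOn), cfcOnSet, StarAlgHom.comp_apply]
  congr 1

lemma cfcOnSet_id (K : Set ℂ) (c : A) (hc : IsStarNormal c)
    (hs : spectrum ℂ c ⊆ K) :
    cfcOnSet K c hc hs (ContinuousMap.restrict K (ContinuousMap.id ℂ)) = c := by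
  have h : (ContinuousMap.compStarAlgHom' ℂ ℂ
      (⟨Set.inclusion hs, continuous_id.subtype_map hs⟩ : C(spectrum ℂ c, K)))
      (ContinuousMap.restrict K (ContinuousMap.id ℂ))
      = ContinuousMap.restrict (spectrum ℂ c) (ContinuousMap.id ℂ) := by
    ext x; rfl
  calc cfcOnSet K c hc hs (ContinuousMap.restrict K (ContinuousMap.id ℂ))
      = cfcHom hc (ContinuousMap.restrict (spectrum ℂ c) (ContinuousMap.id ℂ)) := by
        rw [cfcOnSet, StarAlgHom.comp_apply, h]
    _ = c := cfcHom_id hc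

lemma cfcOnSet_const (K : Set ℂ) (c : A) (hc : IsStarNormal c)
    (hs : spectrum ℂ c ⊆ K) (r : ℂ) :
    cfcOnSet K c hc hs (ContinuousMap.const K r) = algebraMap ℂ A r := by
  have h : (ContinuousMap.const K r) = r • (1 : C(K, ℂ)) := by
    ext x; simp
  rw [h, map_smul, map_one, Algebra.algebraMap_eq_smul_one]

/-- Continuity of the continuous functional calculus along a sequence of normal
contractions. -/
lemma tendsto_cfc_of_tendsto_seq (a : ℕ → A) (b : A)
    (ha : ∀ n, IsStarNormal (a n)) (hb : IsStarNormal b)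
    (hna : ∀ n, ‖a n‖ ≤ 1) (hnb : ‖b‖ ≤ 1)
    (f : ℂ → ℂ) (hf : Continuous f)
    (h : Tendsto a atTop (𝓝 b)) :
    Tendsto (fun n => cfc f (a n)) atTop (𝓝 (cfc f b)) := by
  obtain hA | hA := subsingleton_or_nontrivial A
  · have : ∀ n, cfc f (a n) = cfc f b := fun n => Subsingleton.elim _ _
    simpa [this] using tendsto_const_nhds
  set K : Set ℂ := closedBall 0 1 with hK
  have hcs : ∀ c : A, ‖c‖ ≤ 1 → spectrum ℂ c ⊆ K := fun c hcn =>
    (spectrum.subset_closedBall_norm c).trans (closedBall_subset_closedBall hcn)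
  have hKc : CompactSpace K := isCompact_iff_compactSpace.mp (isCompact_closedBall 0 1)
  set Φ : ℕ → C(K, ℂ) →⋆ₐ[ℂ] A := fun n => cfcOnSet K (a n) (ha n) (hcs _ (hna n)) with hΦ
  set Ψ : C(K, ℂ) →⋆ₐ[ℂ] A := cfcOnSet K b hb (hcs _ hnb) with hΨ
  suffices H : ∀ g : C(K, ℂ), Tendsto (fun n => Φ n g) atTop (𝓝 (Ψ g)) by
    have := H ((⟨f, hf⟩ : C(ℂ, ℂ)).restrict K)
    simpa only [hΦ, hΨ, cfcOnSet_restrict] using this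
  intro g
  induction g using ContinuousMap.induction_on_of_compact with
  | const r => simpa only [hΦ, hΨ, cfcOnSet_const] using tendsto_const_nhds
  | id => simpa only [hΦ, hΨ, cfcOnSet_id] using h
  | star_id =>
      simp only [map_star]
      simp only [hΦ, hΨ, cfcOnSet_id]
      exact h.star
  | add g₁ g₂ h₁ h₂ => simpa only [map_add] using h₁.add h₂
  | mul g₁ g₂ h₁ h₂ => simpa only [map_mul] using h₁.mul h₂
  | frequently g hg =>
      rw [Metric.tendsto_atTop]
      intro ε hε
      obtain ⟨g', hg'P, hg'd⟩ := (hg.and_eventually (Metric.ball_mem_nhds g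
        (by positivity : (0:ℝ) < ε / 4))).exists
      obtain ⟨N, hN⟩ := (Metric.tendsto_atTop.mp hg'P) (ε / 4) (by positivity)
      refine ⟨N, fun n hn => ?_⟩
      have h1 : dist (Φ n g) (Φ n g') ≤ ε / 4 := by
        rw [dist_eq_norm, ← map_sub]
        refine (norm_cfcOnSet_le K _ _ _ _).trans ?_
        rw [← dist_eq_norm, dist_comm]
        exact le_of_lt (Metric.mem_ball.mp hg'd)
      have h3 : dist (Ψ g') (Ψ g) ≤ ε / 4 := by
        rw [dist_eq_norm, ← map_sub]
        refine (norm_cfcOnSet_le K _ _ _ _).trans ?_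
        rw [← dist_eq_norm]
        exact le_of_lt (Metric.mem_ball.mp hg'd)
      have h2 : dist (Φ n g') (Ψ g') < ε / 4 := hN n hn
      calc dist (Φ n g) (Ψ g)
          ≤ dist (Φ n g) (Φ n g') + dist (Φ n g') (Ψ g') + dist (Ψ g') (Ψ g) :=
            dist_triangle4 _ _ _ _
        _ < ε := by linarith

end cfcCont

/-- Let `T₁`, `T₂` be bounded normal operators of norm at most `1` on
complex Hilbert spaces `H₁`, `H₂`, let `f : ℂ → ℂ` be continuous, and let `(Uₙ)` be a
sequence of unitaries `H₁ → H₂` with `‖Uₙ T₁ Uₙ* - T₂‖ → 0`.  Then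
`‖Uₙ f(T₁) Uₙ* - f(T₂)‖ → 0`, where `f(Tᵢ)` is given by the continuous functional
calculus. -/
theorem tendsto_cfc_of_tendsto_unitaryConj {H₁ H₂ : Type*}
    [NormedAddCommGroup H₁] [InnerProductSpace ℂ H₁] [CompleteSpace H₁]
    [NormedAddCommGroup H₂] [InnerProductSpace ℂ H₂] [CompleteSpace H₂]
    (T₁ : H₁ →L[ℂ] H₁) (T₂ : H₂ →L[ℂ] H₂)
    (hT₁ : IsStarNormal T₁) (hT₂ : IsStarNormal T₂)
    (hn₁ : ‖T₁‖ ≤ 1) (hn₂ : ‖T₂‖ ≤ 1)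
    (f : ℂ → ℂ) (hf : Continuous f)
    (U : ℕ → (H₁ ≃ₗᵢ[ℂ] H₂))
    (hU : Filter.Tendsto (fun n => ‖unitaryConj (U n) T₁ - T₂‖) Filter.atTop (𝓝 0)) :
    Filter.Tendsto (fun n => ‖unitaryConj (U n) (cfc f T₁) - cfc f T₂‖)
      Filter.atTop (𝓝 0) := by
  have hnormal : ∀ n, IsStarNormal (unitaryConj (U n) T₁) := fun n =>
    IsStarNormal.map (unitaryConjStarAlgHom (U n)) (r := T₁)
  have hkey : ∀ n, unitaryConj (U n) (cfc f T₁) = cfc f (unitaryConj (U n) T₁) := by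
    intro n
    exact StarAlgHomClass.map_cfc (unitaryConjStarAlgHom (U n)) f T₁ hf.continuousOn
      (unitaryConjStarAlgHom_continuous (U n)) hT₁ (hnormal n)
  have htd : Tendsto (fun n => unitaryConj (U n) T₁) atTop (𝓝 T₂) :=
    tendsto_iff_norm_sub_tendsto_zero.mpr hU
  have := tendsto_cfc_of_tendsto_seq (fun n => unitaryConj (U n) T₁) T₂ hnormal hT₂
    (fun n => (unitaryConj_norm_le (U n) T₁).trans hn₁) hn₂ f hf htd
  have := tendsto_iff_norm_sub_tendsto_zero.mp this
  simpa only [hkey] using this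
end

section
/- Let T be a bounded normal operator on a complex Hilbert space H, and suppose σ(T) = K₁ ∪ K₂ where K₁ and K₂ are nonempty closed sets for which there exists ε > 0 with |λ₁ − λ₂| > ε for all λ₁ ∈ K₁ and λ₂ ∈ K₂. Then there exist closed subspaces V₁ and V₂ of H with V₂ = V₁^⊥, each invariant under both T and T*, such that the spectrum of the restriction of T to Vᵢ equals Kᵢ for i = 1, 2, and moreover the orthogonal projection of H onto V₁ lies in the norm-closed unital *-subalgebra of bounded operators generated by T. -/
lemma clmRestrict_apply {H : Type*} [NormedAddCommGroup H] [InnerProductSpace ℂ H]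
    (T : H →L[ℂ] H) (V : Submodule ℂ H) (hV : ∀ x ∈ V, T x ∈ V) (x : V) :
    (clmRestrict T V hV x : H) = T x := rfl

/-- An indicator function of an open set `U` is continuous on `s` provided `s` is covered by
`U` and another open set disjoint from `U`, and the underlying function is continuous
on `s ∩ U`. -/
lemma indicator_continuousOn {U V s : Set ℂ} (hU : IsOpen U) (hV : IsOpen V)
    (hUV : Disjoint U V) (hs : s ⊆ U ∪ V) {g : ℂ → ℂ}
    (hg : ContinuousOn g (s ∩ U)) : ContinuousOn (U.indicator g) s := by
  intro z hz
  rcases hs hz with h | h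
  · have hmem : U ∈ nhds z := hU.mem_nhds h
    have h1 : ContinuousWithinAt g s z :=
      (continuousWithinAt_inter hmem).mp (hg z ⟨hz, h⟩)
    refine h1.congr_of_eventuallyEq ?_ (Set.indicator_of_mem h g)
    filter_upwards [mem_nhdsWithin_of_mem_nhds hmem] with w hw
    exact Set.indicator_of_mem hw g
  · have hmem : V ∈ nhds z := hV.mem_nhds h
    have h0 : ContinuousWithinAt (fun _ => (0 : ℂ)) s z := continuousWithinAt_const
    refine h0.congr_of_eventuallyEq ?_
      (Set.indicator_of_notMem (Set.disjoint_right.mp hUV h) g)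
    filter_upwards [mem_nhdsWithin_of_mem_nhds hmem] with w hw
    exact Set.indicator_of_notMem (Set.disjoint_right.mp hUV hw) g

lemma cfc_mem_elemental' {A : Type*} [CStarAlgebra A] (a : A) [ha : IsStarNormal a]
    (f : ℂ → ℂ) : cfc f a ∈ StarAlgebra.elemental ℂ a := by
  by_cases hf : ContinuousOn f (spectrum ℂ a)
  · rw [cfc_apply f a ha hf, cfcHom_eq_of_isStarNormal]
    exact SetLike.coe_mem _
  · rw [cfc_apply_of_not_continuousOn a hf]
    exact zero_mem _

section Aux

variable {H : Type*} [NormedAddCommGroup H] [InnerProductSpace ℂ H] [CompleteSpace H]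

/-- Key auxiliary lemma: if `σ(T) ⊆ U ∪ V` with `U, V` open and disjoint, `W` is the subspace
on which `P := cfc (U.indicator 1) T` acts as the identity, and `lam ∉ σ(T) ∩ U`, then `lam`
is not in the spectrum of the restriction of `T` to `W`. -/
lemma aux_not_mem_spectrum_restrict (T : H →L[ℂ] H) [hT : IsStarNormal T]
    {U V : Set ℂ} (hU : IsOpen U) (hV : IsOpen V) (hd : Disjoint U V)
    (hcov : spectrum ℂ T ⊆ U ∪ V) {W : Submodule ℂ H}
    (hW : ∀ x : H, x ∈ W ↔ cfc (U.indicator (1 : ℂ → ℂ)) T x = x)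
    (hWT : ∀ x ∈ W, T x ∈ W) {lam : ℂ} (hlam : lam ∉ spectrum ℂ T ∩ U) :
    lam ∉ spectrum ℂ (clmRestrict T W hWT) := by
  set f : ℂ → ℂ := U.indicator 1 with hf_def
  set g : ℂ → ℂ := U.indicator (fun w => (lam - w)⁻¹) with hg_def
  have hfc : ContinuousOn f (spectrum ℂ T) :=
    indicator_continuousOn hU hV hd hcov continuousOn_const
  have hgc : ContinuousOn g (spectrum ℂ T) := by
    refine indicator_continuousOn hU hV hd hcov ?_
    intro w hw
    have hwne : lam - w ≠ 0 := by
      intro h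
      exact hlam (by simpa [sub_eq_zero.mp h] using hw)
    exact ((continuousAt_const.sub continuousAt_id).inv₀ hwne).continuousWithinAt
  have hsubc : ContinuousOn (fun w : ℂ => lam - w) (spectrum ℂ T) :=
    (continuous_const.sub continuous_id).continuousOn
  set P : H →L[ℂ] H := cfc f T with hP_def
  set B : H →L[ℂ] H := cfc g T with hB_def
  set A : H →L[ℂ] H := algebraMap ℂ (H →L[ℂ] H) lam - T with hA_def
  have hsub : cfc (fun w : ℂ => lam - w) T = A := by
    rw [cfc_sub (fun _ : ℂ => lam) (fun w => w) T continuousOn_const continuous_id.continuousOn,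
      cfc_const lam T, cfc_id' ℂ T]
  have hAB : A * B = P := by
    rw [← hsub, ← cfc_mul (fun w : ℂ => lam - w) g T hsubc hgc]
    refine cfc_congr fun w hw => ?_
    by_cases hwU : w ∈ U
    · have hwne : lam - w ≠ 0 := by
        intro h
        exact hlam (by simpa [sub_eq_zero.mp h] using Set.mem_inter hw hwU)
      simp [hg_def, hf_def, Set.indicator_of_mem hwU, mul_inv_cancel₀ hwne]
    · simp [hg_def, hf_def, Set.indicator_of_notMem hwU]
  have hBA : B * A = P := by
    rw [← hsub, ← cfc_mul g (fun w : ℂ => lam - w) T hgc hsubc, ← hAB, ← hsub,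
      ← cfc_mul (fun w : ℂ => lam - w) g T hsubc hgc]
    exact cfc_congr fun w _ => mul_comm _ _
  have hPB : P * B = B * P := by
    rw [hP_def, hB_def, ← cfc_mul f g T hfc hgc, ← cfc_mul g f T hgc hfc]
    exact cfc_congr fun w _ => mul_comm _ _
  -- B preserves W
  have hWB : ∀ x ∈ W, B x ∈ W := by
    intro x hx
    rw [hW] at hx ⊢
    have h := congrArg (fun S : H →L[ℂ] H => S x) hPB
    simp only [ContinuousLinearMap.mul_apply] at h
    show P (B x) = B x
    rw [h, hx]
  have hWA : ∀ x ∈ W, A x ∈ W := by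
    intro x hx
    have : A x = lam • x - T x := by
      simp [hA_def, Algebra.algebraMap_eq_smul_one]
    rw [this]
    exact W.sub_mem (W.smul_mem lam hx) (hWT x hx)
  -- the restrictions are mutually inverse
  have hWP : ∀ x : H, x ∈ W → P x = x := fun x hx => (hW x).mp hx
  have h1 : clmRestrict A W hWA * clmRestrict B W hWB = 1 := by
    ext x
    show A (B (x : H)) = (x : H)
    calc A (B (x : H)) = (A * B) (x : H) := rfl
    _ = P (x : H) := by rw [hAB]
    _ = (x : H) := hWP _ x.2
  have h2 : clmRestrict B W hWB * clmRestrict A W hWA = 1 := by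
    ext x
    show B (A (x : H)) = (x : H)
    calc B (A (x : H)) = (B * A) (x : H) := rfl
    _ = P (x : H) := by rw [hBA]
    _ = (x : H) := hWP _ x.2
  have hres : algebraMap ℂ (W →L[ℂ] W) lam - clmRestrict T W hWT = clmRestrict A W hWA := by
    ext x
    show ((algebraMap ℂ (W →L[ℂ] W) lam - clmRestrict T W hWT) x : H) = A (x : H)
    simp [hA_def, Algebra.algebraMap_eq_smul_one, ContinuousLinearMap.sub_apply,
      ContinuousLinearMap.smul_apply, ContinuousLinearMap.one_apply, clmRestrict_apply]
  rw [spectrum.notMem_iff, hres]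
  exact isUnit_iff_exists.mpr ⟨clmRestrict B W hWB, h1, h2⟩

end Aux

set_option maxHeartbeats 2000000 in
/-- Let `T` be a bounded normal operator on a complex Hilbert space with
`σ(T) = K₁ ∪ K₂`, where `K₁`, `K₂` are nonempty closed sets which are uniformly separated
by some `ε > 0`.  Then there are closed subspaces `V₁` and `V₂ = V₁ᗮ`, each invariant
under `T` and `T*`, such that the spectrum of the restriction of `T` to `Vᵢ` equals `Kᵢ`,
and the orthogonal projection onto `V₁` lies in the norm-closed unital *-subalgebra of
bounded operators generated by `T`. -/
theorem exists_reducing_decomposition_of_separated_spectrum {H : Type*}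
    [NormedAddCommGroup H] [InnerProductSpace ℂ H] [CompleteSpace H]
    (T : H →L[ℂ] H) (hT : IsStarNormal T)
    (K₁ K₂ : Set ℂ) (hK₁ : K₁.Nonempty) (hK₂ : K₂.Nonempty)
    (hK₁c : IsClosed K₁) (hK₂c : IsClosed K₂)
    (hσ : spectrum ℂ T = K₁ ∪ K₂)
    (ε : ℝ) (hε : 0 < ε) (hsep : ∀ μ₁ ∈ K₁, ∀ μ₂ ∈ K₂, ε < ‖μ₁ - μ₂‖) :
    ∃ (V₁ V₂ : Submodule ℂ H) (hV₁T : ∀ x ∈ V₁, T x ∈ V₁) (hV₂T : ∀ x ∈ V₂, T x ∈ V₂),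
      IsClosed (V₁ : Set H) ∧ IsClosed (V₂ : Set H) ∧ V₂ = V₁ᗮ ∧
      (∀ x ∈ V₁, ContinuousLinearMap.adjoint T x ∈ V₁) ∧
      (∀ x ∈ V₂, ContinuousLinearMap.adjoint T x ∈ V₂) ∧
      spectrum ℂ (clmRestrict T V₁ hV₁T) = K₁ ∧
      spectrum ℂ (clmRestrict T V₂ hV₂T) = K₂ ∧
      ∃ P : H →L[ℂ] H, (∀ x : H, P x ∈ V₁ ∧ x - P x ∈ V₁ᗮ) ∧
        P ∈ (StarAlgebra.adjoin ℂ {T}).topologicalClosure := by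
  haveI := hT
  classical
  have hd12 : ∀ z, z ∈ K₁ → z ∈ K₂ → False := by
    intro z h1 h2
    have := hsep z h1 z h2
    simp only [sub_self, norm_zero] at this
    linarith
  set U₁ : Set ℂ := ⋃ z ∈ K₁, Metric.ball z (ε / 2) with hU₁def
  set U₂ : Set ℂ := ⋃ z ∈ K₂, Metric.ball z (ε / 2) with hU₂def
  have hU₁o : IsOpen U₁ := isOpen_biUnion fun _ _ => Metric.isOpen_ball
  have hU₂o : IsOpen U₂ := isOpen_biUnion fun _ _ => Metric.isOpen_ball
  have hdisj : Disjoint U₁ U₂ := by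
    rw [Set.disjoint_left]
    rintro w hw1 hw2
    simp only [hU₁def, hU₂def, Set.mem_iUnion, Metric.mem_ball] at hw1 hw2
    obtain ⟨z1, hz1, hb1⟩ := hw1
    obtain ⟨z2, hz2, hb2⟩ := hw2
    have h1 := hsep z1 hz1 z2 hz2
    have htri : dist z1 z2 ≤ dist z1 w + dist w z2 := dist_triangle _ _ _
    rw [dist_comm z1 w] at htri
    have : ‖z1 - z2‖ = dist z1 z2 := (dist_eq_norm _ _).symm
    linarith
  have hK₁U : K₁ ⊆ U₁ := fun z hz =>
    Set.mem_biUnion hz (Metric.mem_ball_self (by linarith))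
  have hK₂U : K₂ ⊆ U₂ := fun z hz =>
    Set.mem_biUnion hz (Metric.mem_ball_self (by linarith))
  have hcov : spectrum ℂ T ⊆ U₁ ∪ U₂ := by
    rw [hσ]; exact Set.union_subset_union hK₁U hK₂U
  have hcov' : spectrum ℂ T ⊆ U₂ ∪ U₁ := by rw [Set.union_comm]; exact hcov
  have hσU₁ : spectrum ℂ T ∩ U₁ = K₁ := by
    apply Set.Subset.antisymm
    · rintro z ⟨hzσ, hzU⟩
      rw [hσ] at hzσ
      rcases hzσ with h | h
      · exact h
      · exact absurd hzU (Set.disjoint_right.mp hdisj (hK₂U h))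
    · intro z hz
      exact ⟨by rw [hσ]; exact Or.inl hz, hK₁U hz⟩
  have hσU₂ : spectrum ℂ T ∩ U₂ = K₂ := by
    apply Set.Subset.antisymm
    · rintro z ⟨hzσ, hzU⟩
      rw [hσ] at hzσ
      rcases hzσ with h | h
      · exact absurd hzU (Set.disjoint_left.mp hdisj (hK₁U h))
      · exact h
    · intro z hz
      exact ⟨by rw [hσ]; exact Or.inr hz, hK₂U hz⟩
  set f₁ : ℂ → ℂ := U₁.indicator 1 with hf₁def
  set f₂ : ℂ → ℂ := U₂.indicator 1 with hf₂def
  have hf₁c : ContinuousOn f₁ (spectrum ℂ T) :=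
    indicator_continuousOn hU₁o hU₂o hdisj hcov continuousOn_const
  have hf₂c : ContinuousOn f₂ (spectrum ℂ T) :=
    indicator_continuousOn hU₂o hU₁o hdisj.symm hcov' continuousOn_const
  set P : H →L[ℂ] H := cfc f₁ T with hPdef
  set Q : H →L[ℂ] H := cfc f₂ T with hQdef
  have hPQ : P + Q = 1 := by
    rw [hPdef, hQdef, ← cfc_add (a := T) f₁ f₂ hf₁c hf₂c, ← cfc_one (R := ℂ) (a := T)]
    refine cfc_congr fun z hz => ?_
    rcases hcov hz with h | h
    · simp [hf₁def, hf₂def, Set.indicator_of_mem h,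
        Set.indicator_of_notMem (Set.disjoint_left.mp hdisj h)]
    · simp [hf₁def, hf₂def, Set.indicator_of_mem h,
        Set.indicator_of_notMem (Set.disjoint_right.mp hdisj h)]
  have hPidem : P * P = P := by
    rw [hPdef, ← cfc_mul f₁ f₁ T hf₁c hf₁c]
    refine cfc_congr fun z _ => ?_
    by_cases h : z ∈ U₁ <;> simp [hf₁def, Set.indicator, h]
  have hPP : ∀ x : H, P (P x) = P x := by
    intro x
    have := congrArg (fun S : H →L[ℂ] H => S x) hPidem
    simpa [ContinuousLinearMap.mul_apply] using this
  have hPsa : star P = P := by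
    rw [hPdef, ← cfc_star f₁ T]
    refine cfc_congr fun z _ => ?_
    by_cases h : z ∈ U₁ <;> simp [hf₁def, Set.indicator, h]
  have hPadj : ContinuousLinearMap.adjoint P = P := by
    rw [← ContinuousLinearMap.star_eq_adjoint, hPsa]
  have hTP : T * P = P * T := by
    calc T * P = cfc (fun z : ℂ => z) T * cfc f₁ T := by rw [cfc_id' ℂ T]
    _ = cfc (fun z : ℂ => z * f₁ z) T := (cfc_mul _ _ T continuousOn_id hf₁c).symm
    _ = cfc (fun z : ℂ => f₁ z * z) T := by simp_rw [mul_comm]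
    _ = cfc f₁ T * cfc (fun z : ℂ => z) T := cfc_mul _ _ T hf₁c continuousOn_id
    _ = P * T := by rw [cfc_id' ℂ T]
  have hTPx : ∀ x : H, P (T x) = T (P x) := by
    intro x
    have := congrArg (fun S : H →L[ℂ] H => S x) hTP
    simpa [ContinuousLinearMap.mul_apply] using this.symm
  set V₁ : Submodule ℂ H := LinearMap.ker ((1 - P : H →L[ℂ] H) : H →ₗ[ℂ] H) with hV₁def
  set V₂ : Submodule ℂ H := LinearMap.ker (P : H →ₗ[ℂ] H) with hV₂def
  have hmem₁ : ∀ x : H, x ∈ V₁ ↔ P x = x := by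
    intro x
    rw [hV₁def, LinearMap.mem_ker, ContinuousLinearMap.coe_coe]
    simp only [ContinuousLinearMap.sub_apply, ContinuousLinearMap.one_apply]
    rw [sub_eq_zero, eq_comm]
  have hmem₂ : ∀ x : H, x ∈ V₂ ↔ P x = 0 := by
    intro x
    rw [hV₂def, LinearMap.mem_ker, ContinuousLinearMap.coe_coe]
  have hQx : ∀ x : H, Q x = x - P x := by
    intro x
    have := congrArg (fun S : H →L[ℂ] H => S x) hPQ
    simp only [ContinuousLinearMap.add_apply, ContinuousLinearMap.one_apply] at this
    linear_combination (norm := abel) this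
  have hmem₂' : ∀ x : H, x ∈ V₂ ↔ Q x = x := by
    intro x
    rw [hmem₂, hQx, sub_eq_self]
  have hV₁T : ∀ x ∈ V₁, T x ∈ V₁ := by
    intro x hx
    rw [hmem₁] at hx ⊢
    rw [hTPx, hx]
  have hV₂T : ∀ x ∈ V₂, T x ∈ V₂ := by
    intro x hx
    rw [hmem₂] at hx ⊢
    rw [hTPx, hx, map_zero]
  have hTadjP : ∀ x : H, P (ContinuousLinearMap.adjoint T x) =
      ContinuousLinearMap.adjoint T (P x) := by
    have h : star T * P = P * star T := by
      have := congrArg star hTP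
      simp only [star_mul, hPsa] at this
      exact this.symm
    intro x
    have := congrArg (fun S : H →L[ℂ] H => S x) h
    simp only [ContinuousLinearMap.mul_apply] at this
    rw [← ContinuousLinearMap.star_eq_adjoint]
    exact this.symm
  have hV₁adj : ∀ x ∈ V₁, ContinuousLinearMap.adjoint T x ∈ V₁ := by
    intro x hx
    rw [hmem₁] at hx ⊢
    rw [hTadjP, hx]
  have hV₂adj : ∀ x ∈ V₂, ContinuousLinearMap.adjoint T x ∈ V₂ := by
    intro x hx
    rw [hmem₂] at hx ⊢
    rw [hTadjP, hx, map_zero]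
  have hV₂eq : V₂ = V₁ᗮ := by
    ext x
    rw [Submodule.mem_orthogonal, hmem₂]
    constructor
    · intro hx y hy
      rw [hmem₁] at hy
      calc (inner ℂ y x : ℂ) = inner ℂ (P y) x := by rw [hy]
      _ = inner ℂ (ContinuousLinearMap.adjoint P y) x := by rw [hPadj]
      _ = inner ℂ y (P x) := ContinuousLinearMap.adjoint_inner_left P x y
      _ = 0 := by rw [hx, inner_zero_right]
    · intro hx
      have hPx : (inner ℂ (P x) x : ℂ) = 0 := hx (P x) ((hmem₁ _).mpr (hPP x))
      have : (inner ℂ (P x) (P x) : ℂ) = 0 := by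
        calc (inner ℂ (P x) (P x) : ℂ) = inner ℂ (ContinuousLinearMap.adjoint P x) (P x) := by
              rw [hPadj]
        _ = inner ℂ x (P (P x)) := ContinuousLinearMap.adjoint_inner_left P (P x) x
        _ = inner ℂ x (P x) := by rw [hPP]
        _ = 0 := by rw [← inner_conj_symm, hPx, map_zero]
      exact inner_self_eq_zero.mp this
  -- spectrum inclusions
  have hsub₁ : spectrum ℂ (clmRestrict T V₁ hV₁T) ⊆ K₁ := by
    intro lam hlam
    by_contra h
    exact aux_not_mem_spectrum_restrict T hU₁o hU₂o hdisj hcov hmem₁ hV₁T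
      (by rw [hσU₁]; exact h) hlam
  have hsub₂ : spectrum ℂ (clmRestrict T V₂ hV₂T) ⊆ K₂ := by
    intro lam hlam
    by_contra h
    exact aux_not_mem_spectrum_restrict T hU₂o hU₁o hdisj.symm hcov' hmem₂' hV₂T
      (by rw [hσU₂]; exact h) hlam
  -- the spectra of the restrictions cover the spectrum
  have hsup : spectrum ℂ T ⊆
      spectrum ℂ (clmRestrict T V₁ hV₁T) ∪ spectrum ℂ (clmRestrict T V₂ hV₂T) := by
    intro lam hlam
    by_contra h
    simp only [Set.mem_union, not_or] at h
    obtain ⟨h1, h2⟩ := h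
    rw [spectrum.notMem_iff] at h1 h2
    set A : H →L[ℂ] H := algebraMap ℂ (H →L[ℂ] H) lam - T with hAdef
    have hAx : ∀ x : H, A x = lam • x - T x := by
      intro x
      simp [hAdef, Algebra.algebraMap_eq_smul_one]
    have hAPx : ∀ x : H, P (A x) = A (P x) := by
      intro x
      rw [hAx, hAx, map_sub, map_smul, hTPx]
    have hA₁ : ∀ x ∈ V₁, A x ∈ V₁ := by
      intro x hx
      rw [hAx]
      exact V₁.sub_mem (V₁.smul_mem lam hx) (hV₁T x hx)
    have hA₂ : ∀ x ∈ V₂, A x ∈ V₂ := by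
      intro x hx
      rw [hAx]
      exact V₂.sub_mem (V₂.smul_mem lam hx) (hV₂T x hx)
    have hr₁ : algebraMap ℂ (V₁ →L[ℂ] V₁) lam - clmRestrict T V₁ hV₁T
        = clmRestrict A V₁ hA₁ := by
      ext x
      show ((algebraMap ℂ (V₁ →L[ℂ] V₁) lam - clmRestrict T V₁ hV₁T) x : H) = A (x : H)
      simp [hAx, Algebra.algebraMap_eq_smul_one, ContinuousLinearMap.sub_apply,
        ContinuousLinearMap.smul_apply, ContinuousLinearMap.one_apply, clmRestrict_apply]
    have hr₂ : algebraMap ℂ (V₂ →L[ℂ] V₂) lam - clmRestrict T V₂ hV₂T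
        = clmRestrict A V₂ hA₂ := by
      ext x
      show ((algebraMap ℂ (V₂ →L[ℂ] V₂) lam - clmRestrict T V₂ hV₂T) x : H) = A (x : H)
      simp [hAx, Algebra.algebraMap_eq_smul_one, ContinuousLinearMap.sub_apply,
        ContinuousLinearMap.smul_apply, ContinuousLinearMap.one_apply, clmRestrict_apply]
    rw [hr₁] at h1
    rw [hr₂] at h2
    obtain ⟨S₁, hS₁l, hS₁r⟩ := isUnit_iff_exists.mp h1
    obtain ⟨S₂, hS₂l, hS₂r⟩ := isUnit_iff_exists.mp h2
    set π₁ : H →L[ℂ] V₁ := P.codRestrict V₁ (fun x => (hmem₁ _).mpr (hPP x)) with hπ₁def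
    set π₂ : H →L[ℂ] V₂ := (1 - P).codRestrict V₂ (fun x => by
      rw [hmem₂]
      simp only [ContinuousLinearMap.sub_apply, ContinuousLinearMap.one_apply, map_sub]
      rw [hPP, sub_self]) with hπ₂def
    set S : H →L[ℂ] H := V₁.subtypeL.comp (S₁.comp π₁) + V₂.subtypeL.comp (S₂.comp π₂)
      with hSdef
    have hπ₁x : ∀ x : H, ((π₁ x : V₁) : H) = P x := fun x => rfl
    have hπ₂x : ∀ x : H, ((π₂ x : V₂) : H) = x - P x := fun x => rfl
    have key1 : A * S = 1 := by
      ext x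
      show A (S x) = x
      have hSx : S x = ((S₁ (π₁ x) : V₁) : H) + ((S₂ (π₂ x) : V₂) : H) := rfl
      rw [hSx, map_add]
      have e1 : A ((S₁ (π₁ x) : V₁) : H) = ((clmRestrict A V₁ hA₁ (S₁ (π₁ x)) : V₁) : H) := rfl
      have e2 : A ((S₂ (π₂ x) : V₂) : H) = ((clmRestrict A V₂ hA₂ (S₂ (π₂ x)) : V₂) : H) := rfl
      rw [e1, e2]
      have f1 : clmRestrict A V₁ hA₁ (S₁ (π₁ x)) = π₁ x := by
        have := congrArg (fun R : V₁ →L[ℂ] V₁ => R (π₁ x)) hS₁l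
        simpa [ContinuousLinearMap.mul_apply] using this
      have f2 : clmRestrict A V₂ hA₂ (S₂ (π₂ x)) = π₂ x := by
        have := congrArg (fun R : V₂ →L[ℂ] V₂ => R (π₂ x)) hS₂l
        simpa [ContinuousLinearMap.mul_apply] using this
      rw [f1, f2, hπ₁x, hπ₂x]
      abel
    have key2 : S * A = 1 := by
      ext x
      show S (A x) = x
      have hSAx : S (A x) = ((S₁ (π₁ (A x)) : V₁) : H) + ((S₂ (π₂ (A x)) : V₂) : H) := rfl
      have g1 : π₁ (A x) = clmRestrict A V₁ hA₁ (π₁ x) := by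
        apply Subtype.ext
        show P (A x) = A (P x)
        exact hAPx x
      have g2 : π₂ (A x) = clmRestrict A V₂ hA₂ (π₂ x) := by
        apply Subtype.ext
        show A x - P (A x) = A (x - P x)
        rw [hAPx, map_sub]
      have f1 : S₁ (clmRestrict A V₁ hA₁ (π₁ x)) = π₁ x := by
        have := congrArg (fun R : V₁ →L[ℂ] V₁ => R (π₁ x)) hS₁r
        simpa [ContinuousLinearMap.mul_apply] using this
      have f2 : S₂ (clmRestrict A V₂ hA₂ (π₂ x)) = π₂ x := by
        have := congrArg (fun R : V₂ →L[ℂ] V₂ => R (π₂ x)) hS₂r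
        simpa [ContinuousLinearMap.mul_apply] using this
      rw [hSAx, g1, g2, f1, f2, hπ₁x, hπ₂x]
      abel
    have : IsUnit A := isUnit_iff_exists.mpr ⟨S, key1, key2⟩
    rw [hAdef] at this
    exact (spectrum.notMem_iff.mpr this) hlam
  have hspec₁ : spectrum ℂ (clmRestrict T V₁ hV₁T) = K₁ := by
    refine Set.Subset.antisymm hsub₁ fun lam hl => ?_
    have hlσ : lam ∈ spectrum ℂ T := by rw [hσ]; exact Or.inl hl
    rcases hsup hlσ with h | h
    · exact h
    · exact absurd (hsub₂ h) (fun hk => hd12 lam hl hk)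
  have hspec₂ : spectrum ℂ (clmRestrict T V₂ hV₂T) = K₂ := by
    refine Set.Subset.antisymm hsub₂ fun lam hl => ?_
    have hlσ : lam ∈ spectrum ℂ T := by rw [hσ]; exact Or.inr hl
    rcases hsup hlσ with h | h
    · exact absurd (hsub₁ h) (fun hk => hd12 lam hk hl)
    · exact h
  refine ⟨V₁, V₂, hV₁T, hV₂T, ?_, ?_, hV₂eq, hV₁adj, hV₂adj, hspec₁, hspec₂,
    P, fun x => ⟨(hmem₁ _).mpr (hPP x), ?_⟩, ?_⟩
  · exact ContinuousLinearMap.isClosed_ker (1 - P)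
  · exact ContinuousLinearMap.isClosed_ker P
  · rw [← hV₂eq, hmem₂, map_sub, hPP, sub_self]
  · exact cfc_mem_elemental' T f₁
end

section
/- Let T₁ and T₂ be bounded normal operators on complex Hilbert spaces H₁ and H₂ such that σ(T₁) = σ(T₂) = K with K a finite set, and suppose that for each λ ∈ K the eigenspaces ker(T₁ − λ·I) and ker(T₂ − λ·I) admit total orthonormal families (Hilbert bases) of the same cardinality. Then there exists a unitary operator U : H₁ → H₂ with U T₁ = T₂ U. -/
universe u₁ u₂

open scoped InnerProductSpace

section Aux

variable {H : Type*} [NormedAddCommGroup H] [InnerProductSpace ℂ H] [CompleteSpace H]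

theorem auxIsStarNormal (T : H →L[ℂ] H) (hT : IsStarNormal T) (μ : ℂ) :
    IsStarNormal (T - μ • (1 : H →L[ℂ] H)) := by
  constructor
  have h := hT.star_comm_self
  rw [Commute, SemiconjBy] at h ⊢
  simp only [star_sub, star_smul, star_one, RCLike.star_def]
  simp only [sub_mul, mul_sub, smul_mul_assoc, mul_smul_comm, one_mul, mul_one, h, smul_smul,
    mul_comm μ (starRingEnd ℂ μ), smul_sub]
  abel

theorem auxAdjointApply (T : H →L[ℂ] H) (hT : IsStarNormal T) (μ : ℂ) {x : H}
    (hx : x ∈ LinearMap.ker (↑(T - μ • (1 : H →L[ℂ] H)) : H →ₗ[ℂ] H)) :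
    ContinuousLinearMap.adjoint T x = (starRingEnd ℂ) μ • x := by
  set S := T - μ • (1 : H →L[ℂ] H) with hS
  have hSn : IsStarNormal S := auxIsStarNormal T hT μ
  have hx' : S x = 0 := hx
  have key : ContinuousLinearMap.adjoint S x = 0 := by
    rw [← inner_self_eq_zero (𝕜 := ℂ)]
    rw [ContinuousLinearMap.adjoint_inner_left]
    have h1 : S (ContinuousLinearMap.adjoint S x) = (S * ContinuousLinearMap.adjoint S) x := rfl
    rw [h1, ← ContinuousLinearMap.star_eq_adjoint, ← hSn.star_comm_self.eq]
    show (inner ℂ x ((star S) (S x)) : ℂ) = 0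
    rw [hx', map_zero, inner_zero_right]
  have hadj : ContinuousLinearMap.adjoint S
      = ContinuousLinearMap.adjoint T - (starRingEnd ℂ) μ • (1 : H →L[ℂ] H) := by
    rw [← ContinuousLinearMap.star_eq_adjoint, ← ContinuousLinearMap.star_eq_adjoint, hS,
      star_sub, star_smul, star_one, RCLike.star_def]
  rw [hadj] at key
  simpa using sub_eq_zero.mp key

theorem auxOrthogonalFamily (T : H →L[ℂ] H) (hT : IsStarNormal T) (K : Set ℂ) :
    OrthogonalFamily ℂ (fun μ : K => (LinearMap.ker (↑(T - (μ:ℂ) • (1 : H →L[ℂ] H)) : H →ₗ[ℂ] H) : Submodule ℂ H))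
      (fun μ => (LinearMap.ker (↑(T - (μ:ℂ) • (1 : H →L[ℂ] H)) : H →ₗ[ℂ] H)).subtypeₗᵢ) := by
  intro μ ν hμν x y
  simp only [Submodule.coe_subtypeₗᵢ, Submodule.coe_subtype]
  have hy : T (y : H) = (ν : ℂ) • (y : H) := by
    have h2 : T (y:H) - (ν:ℂ) • (y:H) = 0 := y.2
    linear_combination (norm := module) h2
  have h1 : ⟪(x : H), T (y : H)⟫_ℂ = (ν : ℂ) * ⟪(x:H), (y:H)⟫_ℂ := by
    rw [hy, inner_smul_right]
  have h2 : ⟪(x : H), T (y : H)⟫_ℂ = (μ : ℂ) * ⟪(x:H), (y:H)⟫_ℂ := by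
    rw [← ContinuousLinearMap.adjoint_inner_left, auxAdjointApply T hT μ x.2, inner_smul_left]
    simp
  have hne : (μ : ℂ) ≠ (ν : ℂ) := fun h => hμν (Subtype.ext h)
  rcases mul_eq_mul_right_iff.mp (h1.symm.trans h2).symm with h | h
  · exact absurd h hne
  · exact h

theorem aux_iSup_ker (T : H →L[ℂ] H) (hT : IsStarNormal T) (K : Set ℂ) (hK : K.Finite)
    (hσ : spectrum ℂ T = K) [Fintype K] :
    ⨆ μ : K, LinearMap.ker (↑(T - (μ : ℂ) • (1 : H →L[ℂ] H)) : H →ₗ[ℂ] H) = ⊤ := by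
  classical
  have hfin : (spectrum ℂ T).Finite := hσ ▸ hK
  have hcont : ∀ f : ℂ → ℂ, ContinuousOn f (spectrum ℂ T) := fun f => hfin.continuousOn f
  set e : K → (H →L[ℂ] H) := fun μ => cfc (fun z => if z = (μ : ℂ) then (1 : ℂ) else 0) T with he
  have h1 : ∑ μ : K, e μ = 1 := by
    rw [he, ← cfc_sum_univ _ T (fun i => hcont _), ← cfc_const_one ℂ T]
    apply cfc_congr
    intro z hz
    rw [hσ] at hz
    have hiff : ∀ μ : K, ((z = (μ:ℂ)) = (μ = (⟨z, hz⟩ : K))) := by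
      intro μ; simp [Subtype.ext_iff, eq_comm]
    simp only [Finset.sum_apply, hiff]
    simp
  have h2 : ∀ μ : K, (T - (μ:ℂ) • (1 : H →L[ℂ] H)) * e μ = 0 := by
    intro μ
    have hTμ : T - (μ:ℂ) • (1 : H →L[ℂ] H) = cfc (fun z => z - (μ:ℂ)) T := by
      rw [cfc_sub (fun z => z) (fun _ => (μ:ℂ)) T (hcont _) (hcont _), cfc_id' ℂ T,
        cfc_const (μ:ℂ) T, Algebra.algebraMap_eq_smul_one]
    rw [hTμ, he, ← cfc_mul _ _ T (hcont _) (hcont _)]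
    have hz : (fun z => (z - (μ:ℂ)) * if z = (μ:ℂ) then (1:ℂ) else 0) = (fun _ => (0:ℂ)) := by
      funext z
      by_cases h : z = (μ:ℂ) <;> simp [h]
    rw [hz, cfc_const_zero ℂ T]
  rw [eq_top_iff]
  intro x _
  have hx : x = ∑ μ : K, e μ x := by
    have := congrArg (fun S : H →L[ℂ] H => S x) h1
    simpa using this.symm
  rw [hx]
  refine Submodule.sum_mem _ fun μ _ => Submodule.mem_iSup_of_mem μ ?_
  rw [LinearMap.mem_ker]
  have h3 : (↑(T - (μ:ℂ) • (1 : H →L[ℂ] H)) : H →ₗ[ℂ] H) (e μ x) = ((T - (μ:ℂ) • 1) * e μ) x := rfl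
  rw [h3, h2 μ]
  rfl

noncomputable def auxHilbertBasis (E : Submodule ℂ H) [CompleteSpace E] (s : Set H)
    (hs : Orthonormal ℂ ((↑) : s → H))
    (hsp : (Submodule.span ℂ s).topologicalClosure = E) : HilbertBasis s ℂ E := by
  classical
  have hmem : ∀ i : s, (i : H) ∈ E := fun i =>
    hsp ▸ Submodule.le_topologicalClosure _ (Submodule.subset_span i.2)
  set v : s → E := fun i : s => (⟨(i : H), hmem i⟩ : E) with hv
  have hrange : E.subtype '' Set.range v = s := by
    ext z
    constructor
    · rintro ⟨w, ⟨i, rfl⟩, rfl⟩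
      exact i.2
    · intro hz
      exact ⟨v ⟨z, hz⟩, ⟨⟨z, hz⟩, rfl⟩, rfl⟩
  have himg : ((↑) : E → H) '' (Submodule.span ℂ (Set.range v) : Set E)
      = (Submodule.span ℂ s : Set H) := by
    have h1 : (Submodule.map E.subtype (Submodule.span ℂ (Set.range v)) : Set H)
        = E.subtype '' (Submodule.span ℂ (Set.range v) : Set E) := Submodule.map_coe _ _
    rw [show (((↑) : E → H) '' _) = E.subtype '' (Submodule.span ℂ (Set.range v) : Set E) from rfl,
      ← h1, Submodule.map_span, hrange]
  refine HilbertBasis.mk (v := v) ?_ ?_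
  · rw [orthonormal_iff_ite] at hs ⊢
    intro i j
    simpa [hv, Submodule.coe_inner] using hs i j
  · intro x _
    have hx : (x : H) ∈ closure ((Submodule.span ℂ s : Set H)) :=
      (SetLike.ext_iff.mp hsp (↑x)).mpr x.2
    show x ∈ closure (Submodule.span ℂ (Set.range v) : Set E)
    rw [closure_subtype, himg]
    exact hx

-- any two Hilbert spaces with Hilbert bases indexed by equipotent types are isometric
noncomputable def auxEquivOfBases {E : Type*} {F : Type*}
    [NormedAddCommGroup E] [InnerProductSpace ℂ E] [CompleteSpace E]
    [NormedAddCommGroup F] [InnerProductSpace ℂ F] [CompleteSpace F]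
    {ι κ : Type*} (b₁ : HilbertBasis ι ℂ E) (b₂ : HilbertBasis κ ℂ F) (e : ι ≃ κ) :
    E ≃ₗᵢ[ℂ] F := by
  have horth : Orthonormal ℂ (⇑b₂ ∘ ⇑e) := b₂.orthonormal.comp e e.injective
  have hdense : ⊤ ≤ (Submodule.span ℂ (Set.range (⇑b₂ ∘ ⇑e))).topologicalClosure := by
    have : Set.range (⇑b₂ ∘ ⇑e) = Set.range ⇑b₂ := by
      rw [Set.range_comp, Equiv.range_eq_univ, Set.image_univ]
    have hd : (Submodule.span ℂ (Set.range ⇑b₂)).topologicalClosure = ⊤ := b₂.dense_span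
    rw [this, hd]
  exact b₁.repr.trans (HilbertBasis.mk horth hdense).repr.symm

end Aux

/-- Let `T₁`, `T₂` be bounded normal operators on complex Hilbert spaces
`H₁`, `H₂` with `σ(T₁) = σ(T₂) = K` for a finite set `K`, and suppose that for each
`μ ∈ K` the eigenspaces `ker (T₁ - μ)` and `ker (T₂ - μ)` admit total orthonormal families
of the same cardinality.  Then there is a unitary `U : H₁ → H₂` with `U T₁ = T₂ U`. -/
theorem exists_unitary_conjugating_of_finite_spectrum {H₁ : Type u₁} {H₂ : Type u₂}
    [NormedAddCommGroup H₁] [InnerProductSpace ℂ H₁] [CompleteSpace H₁]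
    [NormedAddCommGroup H₂] [InnerProductSpace ℂ H₂] [CompleteSpace H₂]
    (T₁ : H₁ →L[ℂ] H₁) (T₂ : H₂ →L[ℂ] H₂)
    (hT₁ : IsStarNormal T₁) (hT₂ : IsStarNormal T₂)
    (K : Set ℂ) (hK : K.Finite)
    (hσ₁ : spectrum ℂ T₁ = K) (hσ₂ : spectrum ℂ T₂ = K)
    (hdim : ∀ μ ∈ K, ∃ (s₁ : Set H₁) (s₂ : Set H₂),
      Orthonormal ℂ ((↑) : s₁ → H₁) ∧ Orthonormal ℂ ((↑) : s₂ → H₂) ∧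
      (Submodule.span ℂ s₁).topologicalClosure
        = LinearMap.ker (↑(T₁ - μ • (1 : H₁ →L[ℂ] H₁)) : H₁ →ₗ[ℂ] H₁) ∧
      (Submodule.span ℂ s₂).topologicalClosure
        = LinearMap.ker (↑(T₂ - μ • (1 : H₂ →L[ℂ] H₂)) : H₂ →ₗ[ℂ] H₂) ∧
      Cardinal.lift.{u₂} (Cardinal.mk s₁) = Cardinal.lift.{u₁} (Cardinal.mk s₂)) :
    ∃ U : H₁ ≃ₗᵢ[ℂ] H₂, ∀ x : H₁, U (T₁ x) = T₂ (U x) := by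
  classical
  haveI : Fintype K := hK.fintype
  set E : K → Submodule ℂ H₁ := fun μ => LinearMap.ker (↑(T₁ - (μ:ℂ) • (1 : H₁ →L[ℂ] H₁)) : H₁ →ₗ[ℂ] H₁) with hE
  set F : K → Submodule ℂ H₂ := fun μ => LinearMap.ker (↑(T₂ - (μ:ℂ) • (1 : H₂ →L[ℂ] H₂)) : H₂ →ₗ[ℂ] H₂) with hF
  haveI hEc : ∀ μ : K, CompleteSpace (E μ) := fun μ =>
    (ContinuousLinearMap.isClosed_ker _).completeSpace_coe
  haveI hFc : ∀ μ : K, CompleteSpace (F μ) := fun μ =>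
    (ContinuousLinearMap.isClosed_ker _).completeSpace_coe
  have hEo := auxOrthogonalFamily T₁ hT₁ K
  have hFo := auxOrthogonalFamily T₂ hT₂ K
  have hEs : ⨆ μ : K, E μ = ⊤ := aux_iSup_ker T₁ hT₁ K hK hσ₁
  have hFs : ⨆ μ : K, F μ = ⊤ := aux_iSup_ker T₂ hT₂ K hK hσ₂
  have hEi : DirectSum.IsInternal E :=
    (DirectSum.isInternal_submodule_iff_iSupIndep_and_iSup_eq_top E).mpr
      ⟨hEo.independent, hEs⟩
  have hFi : DirectSum.IsInternal F :=
    (DirectSum.isInternal_submodule_iff_iSupIndep_and_iSup_eq_top F).mpr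
      ⟨hFo.independent, hFs⟩
  -- eigenspace unitaries
  have hu : ∀ μ : K, Nonempty ((E μ) ≃ₗᵢ[ℂ] (F μ)) := by
    intro μ
    obtain ⟨s₁, s₂, h₁, h₂, hsp₁, hsp₂, hcard⟩ := hdim (μ:ℂ) μ.2
    obtain ⟨e⟩ := Cardinal.lift_mk_eq'.mp hcard
    exact ⟨auxEquivOfBases (auxHilbertBasis (E μ) s₁ h₁ hsp₁)
      (auxHilbertBasis (F μ) s₂ h₂ hsp₂) e⟩
  have u : ∀ μ : K, (E μ ≃ₗᵢ[ℂ] F μ) := fun μ => (hu μ).some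
  set V₁ := hEi.isometryL2OfOrthogonalFamily hEo with hV₁
  set V₂ := hFi.isometryL2OfOrthogonalFamily hFo with hV₂
  set W := (LinearIsometryEquiv.piLpCongrRight 2 u) with hW
  set U : H₁ ≃ₗᵢ[ℂ] H₂ := V₁.trans (W.trans V₂.symm) with hU
  -- key: U maps E μ to F μ via u μ
  have hsingle : ∀ (μ : K) (x : E μ),
      V₁ (x : H₁) = (WithLp.equiv 2 _).symm (Pi.single μ x) := by
    intro μ x
    have hsymm : V₁.symm ((WithLp.equiv 2 _).symm (Pi.single μ x)) = (x : H₁) := by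
      rw [hV₁, DirectSum.IsInternal.isometryL2OfOrthogonalFamily_symm_apply]
      rw [Finset.sum_eq_single μ]
      · simp
      · intro ν _ hν
        simp [Pi.single_eq_of_ne hν]
      · intro h
        exact absurd (Finset.mem_univ μ) h
    rw [← hsymm, LinearIsometryEquiv.apply_symm_apply]
  have hUmem : ∀ (μ : K) (x : E μ), U (x : H₁) = ((u μ x : F μ) : H₂) := by
    intro μ x
    rw [hU]
    simp only [LinearIsometryEquiv.trans_apply]
    rw [hsingle μ x, hW, show (WithLp.equiv 2 ((j : K) → E j)).symm (Pi.single μ x) = PiLp.single 2 μ x from rfl,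
      LinearIsometryEquiv.piLpCongrRight_single]
    rw [hV₂, DirectSum.IsInternal.isometryL2OfOrthogonalFamily_symm_apply]
    rw [Finset.sum_eq_single μ]
    · simp
    · intro ν _ hν
      simp [Pi.single_eq_of_ne hν]
    · intro h
      exact absurd (Finset.mem_univ μ) h
  refine ⟨U, fun x => ?_⟩
  have hx : x ∈ ⨆ μ : K, E μ := hEs ▸ Submodule.mem_top
  refine Submodule.iSup_induction E (motive := fun y => U (T₁ y) = T₂ (U y)) hx ?_ ?_ ?_
  · intro μ y hy
    have hT1y : T₁ y = (μ:ℂ) • y := by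
      have h4 : T₁ y - (μ:ℂ) • y = 0 := hy
      linear_combination (norm := module) h4
    have h2 : U y = ((u μ ⟨y, hy⟩ : F μ) : H₂) := hUmem μ ⟨y, hy⟩
    have h3 : T₂ (U y) = (μ:ℂ) • U y := by
      rw [h2]
      have h4 : T₂ ↑(u μ ⟨y,hy⟩) - (μ:ℂ) • (↑(u μ ⟨y,hy⟩) : H₂) = 0 := (u μ ⟨y,hy⟩).2
      linear_combination (norm := module) h4
    rw [hT1y, h3]
    exact U.map_smul _ _
  · simp
  · intro y z hy hz
    simp only [map_add, hy, hz]
end
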